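/- Let c ∈ ℂ, r > 0, and let f : ℂ → ℂ be complex-differentiable on an open set containing the closed disk {z : |z - c| ≤ r}. Let x_0, …, x_n be distinct points in the open disk {z : |z - c| < r}, let l(s) = ∏_{i=0}^n (s - x_i), and let P_n(x) = ∑_{i=0}^n f(x_i) ∏_{j≠i} (x - x_j)/(x_i - x_j) be the Lagrange interpolating polynomial of f at these nodes. Then for every x in the open disk {z : |z - c| < r}, f(x) - P_n(x) = (1/(2πi)) ∮_{|t-c|=r} (l(x)/l(t))·(f(t)/(t - x)) dt, where the integral is the circle integral over the circle of center c and radius r. -/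

import Mathlib

open Finset

lemma hermite_key {n : ℕ} (x : Fin (n + 1) → ℂ) (hx : Function.Injective x)
    (t w : ℂ) (ht : ∀ i, t ≠ x i) :
    ∏ i, (t - x i) - ∏ i, (w - x i) =
      (t - w) * ∑ i, (∏ j ∈ univ.erase i, (w - x j) / (x i - x j)) *
        ∏ j ∈ univ.erase i, (t - x j) := by
  classical
  set L : Polynomial ℂ := ∏ i, (Polynomial.X - Polynomial.C (x i)) with hL
  have hevalL : ∀ a : ℂ, L.eval a = ∏ i, (a - x i) := by
    intro a; simp [hL, Polynomial.eval_prod]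
  have hdvd : (Polynomial.X - Polynomial.C t) ∣ (Polynomial.C (L.eval t) - L) := by
    rw [Polynomial.dvd_iff_isRoot]
    simp [Polynomial.IsRoot]
  obtain ⟨p, hp⟩ := hdvd
  have hdegL : L.degree = ((n + 1 : ℕ) : WithBot ℕ) := by
    rw [hL, Polynomial.degree_prod]
    simp [Polynomial.degree_X_sub_C]
  have hdegCL : (Polynomial.C (L.eval t) - L).degree = ((n + 1 : ℕ) : WithBot ℕ) := by
    rw [Polynomial.degree_sub_eq_right_of_degree_lt, hdegL]
    rw [hdegL]
    exact lt_of_le_of_lt Polynomial.degree_C_le (by exact_mod_cast Nat.succ_pos n)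
  have hpne : p ≠ 0 := by
    rintro rfl
    rw [mul_zero] at hp
    rw [hp, Polynomial.degree_zero] at hdegCL
    exact absurd hdegCL.symm WithBot.coe_ne_bot
  have hXt : Polynomial.X - Polynomial.C t ≠ 0 := Polynomial.X_sub_C_ne_zero t
  have hnatp : p.natDegree = n := by
    have h1 : (Polynomial.C (L.eval t) - L).natDegree = n + 1 :=
      Polynomial.natDegree_eq_of_degree_eq_some hdegCL
    rw [hp, Polynomial.natDegree_mul hXt hpne, Polynomial.natDegree_X_sub_C] at h1
    omega
  have hinj : Set.InjOn x ↑(univ : Finset (Fin (n + 1))) := hx.injOn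
  have hdegp : p.degree < (#(univ : Finset (Fin (n + 1))) : WithBot ℕ) := by
    refine lt_of_le_of_lt (Polynomial.degree_le_natDegree) ?_
    rw [hnatp]
    simp only [card_univ, Fintype.card_fin]
    exact_mod_cast Nat.lt_succ_self n
  have hpeq := Lagrange.eq_interpolate hinj hdegp
  have hpev : ∀ i, p.eval (x i) = -(∏ j ∈ univ.erase i, (t - x j)) := by
    intro i
    have h0 := congrArg (Polynomial.eval (x i)) hp
    have hLxi : L.eval (x i) = 0 := by
      rw [hevalL]
      exact Finset.prod_eq_zero (mem_univ i) (by ring)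
    simp only [Polynomial.eval_sub, Polynomial.eval_C, Polynomial.eval_mul,
      Polynomial.eval_X, hLxi, sub_zero] at h0
    have hne : x i - t ≠ 0 := sub_ne_zero.2 (fun h => ht i (by rw [h]))
    apply mul_left_cancel₀ hne
    rw [← h0, hevalL, ← Finset.mul_prod_erase univ _ (mem_univ i)]
    ring
  have h0 := congrArg (Polynomial.eval w) hp
  simp only [Polynomial.eval_sub, Polynomial.eval_C, Polynomial.eval_mul,
    Polynomial.eval_X] at h0
  rw [hevalL, hevalL] at h0
  rw [h0, hpeq]
  simp only [Lagrange.interpolate_apply, Lagrange.basis, Lagrange.basisDivisor,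
    Polynomial.eval_finset_sum, Polynomial.eval_mul, Polynomial.eval_C,
    Polynomial.eval_prod, Polynomial.eval_sub, Polynomial.eval_X, hpev]
  rw [Finset.mul_sum, Finset.mul_sum]
  refine Finset.sum_congr rfl fun i _ => ?_
  simp only [div_eq_mul_inv, Finset.prod_mul_distrib]
  ring

/-- Hermite integral formula for polynomial (Lagrange) interpolation, with the contour
taken to be the circle of center `c` and radius `r`. -/
theorem hermite_integral_formula_polynomial (c : ℂ) (r : ℝ) (hr : 0 < r) (f : ℂ → ℂ)
    (U : Set ℂ) (hUopen : IsOpen U) (hUsub : Metric.closedBall c r ⊆ U)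
    (hf : DifferentiableOn ℂ f U)
    (n : ℕ) (x : Fin (n + 1) → ℂ) (hx : Function.Injective x)
    (hxball : ∀ i, x i ∈ Metric.ball c r)
    (l : ℂ → ℂ) (hl : ∀ s, l s = ∏ i, (s - x i))
    (P : ℂ → ℂ)
    (hP : ∀ X, P X = ∑ i, f (x i) * ∏ j ∈ univ.erase i, (X - x j) / (x i - x j))
    (X : ℂ) (hX : X ∈ Metric.ball c r) :
    f X - P X = (1 / (2 * (Real.pi : ℂ) * Complex.I)) *
      ∮ t in C(c, r), (l X / l t) * (f t / (t - X)) := by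
  classical
  have hπ : (2 * (Real.pi : ℂ) * Complex.I) ≠ 0 := by
    simp [Real.pi_ne_zero, Complex.I_ne_zero, Complex.ofReal_ne_zero]
  have hfc : ContinuousOn f (Metric.closedBall c r) := hf.continuousOn.mono hUsub
  have hdc : DiffContOnCl ℂ f (Metric.ball c r) := by
    constructor
    · exact hf.mono (Metric.ball_subset_closedBall.trans hUsub)
    · refine hfc.mono ?_
      rw [closure_ball c hr.ne']
  have hsx : ∀ z ∈ Metric.sphere c r, ∀ w ∈ Metric.ball c r, z ≠ w := by
    intro z hz w hw h
    rw [h] at hz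
    rw [Metric.mem_sphere] at hz
    rw [Metric.mem_ball] at hw
    exact absurd hz (ne_of_lt hw)
  have cauchy : ∀ w ∈ Metric.ball c r,
      (∮ z in C(c, r), f z / (z - w)) = (2 * (Real.pi : ℂ) * Complex.I) * f w := by
    intro w hw
    have h := hdc.circleIntegral_sub_inv_smul hw
    simp only [smul_eq_mul] at h
    rw [← h]
    refine circleIntegral.integral_congr hr.le fun z hz => ?_
    simp [div_eq_inv_mul]
  -- pointwise identity on the circle
  have hcongr : Set.EqOn (fun z => (l X / l z) * (f z / (z - X)))
      (fun z => f z / (z - X) - ∑ i,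
        (∏ j ∈ univ.erase i, (X - x j) / (x i - x j)) * (f z / (z - x i)))
      (Metric.sphere c r) := by
    intro z hz
    have hzx : ∀ i, z ≠ x i := fun i => hsx z hz (x i) (hxball i)
    have hzX : z - X ≠ 0 := sub_ne_zero.2 (hsx z hz X hX)
    have hlz : l z ≠ 0 := by
      rw [hl]
      exact Finset.prod_ne_zero_iff.2 fun i _ => sub_ne_zero.2 (hzx i)
    have key := hermite_key x hx z X hzx
    rw [← hl z, ← hl X] at key
    have hterm : ∀ i, (∏ j ∈ univ.erase i, (X - x j) / (x i - x j)) * (f z / (z - x i))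
        = ((∏ j ∈ univ.erase i, (X - x j) / (x i - x j)) *
            ∏ j ∈ univ.erase i, (z - x j)) * f z / l z := by
      intro i
      have hzi : z - x i ≠ 0 := sub_ne_zero.2 (hzx i)
      have hpe : (∏ j ∈ univ.erase i, (z - x j)) ≠ 0 :=
        Finset.prod_ne_zero_iff.2 fun j _ => sub_ne_zero.2 (hzx j)
      rw [hl z, ← Finset.mul_prod_erase univ _ (mem_univ i)]
      field_simp
    simp only
    rw [Finset.sum_congr rfl fun i _ => hterm i, ← Finset.sum_div, ← Finset.sum_mul]
    have hlX : l X = l z - (z - X) *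
        ∑ i, (∏ j ∈ univ.erase i, (X - x j) / (x i - x j)) *
          ∏ j ∈ univ.erase i, (z - x j) := by
      rw [← key]; ring
    rw [hlX]
    field_simp
  -- integrability facts
  have hcont : ∀ w ∈ Metric.ball c r,
      ContinuousOn (fun z => f z / (z - w)) (Metric.sphere c r) := by
    intro w hw
    exact (hfc.mono Metric.sphere_subset_closedBall).div
      (continuousOn_id.sub continuousOn_const)
      (fun z hz => sub_ne_zero.2 (hsx z hz w hw))
  have hci : ∀ w ∈ Metric.ball c r, CircleIntegrable (fun z => f z / (z - w)) c r :=
    fun w hw => (hcont w hw).circleIntegrable hr.le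
  have hgi : ∀ i : Fin (n + 1), CircleIntegrable
      (fun z => (∏ j ∈ univ.erase i, (X - x j) / (x i - x j)) * (f z / (z - x i))) c r :=
    fun i => (continuousOn_const.mul (hcont (x i) (hxball i))).circleIntegrable hr.le
  have hsumci : CircleIntegrable (fun z => ∑ i,
      (∏ j ∈ univ.erase i, (X - x j) / (x i - x j)) * (f z / (z - x i))) c r := by
    apply ContinuousOn.circleIntegrable hr.le
    exact continuousOn_finset_sum _ fun i _ =>
      continuousOn_const.mul (hcont (x i) (hxball i))
  have hswap : (∮ z in C(c, r), ∑ i,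
        (∏ j ∈ univ.erase i, (X - x j) / (x i - x j)) * (f z / (z - x i)))
      = ∑ i, ∮ z in C(c, r),
        (∏ j ∈ univ.erase i, (X - x j) / (x i - x j)) * (f z / (z - x i)) := by
    simp only [circleIntegral, Finset.smul_sum]
    exact intervalIntegral.integral_finset_sum fun i _ => (hgi i).out
  have hterm2 : ∀ i : Fin (n + 1), (∮ z in C(c, r),
        (∏ j ∈ univ.erase i, (X - x j) / (x i - x j)) * (f z / (z - x i)))
      = (∏ j ∈ univ.erase i, (X - x j) / (x i - x j)) *
          ((2 * (Real.pi : ℂ) * Complex.I) * f (x i)) := by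
    intro i
    have h := circleIntegral.integral_smul (𝕜 := ℂ)
      (∏ j ∈ univ.erase i, (X - x j) / (x i - x j)) (fun z => f z / (z - x i)) c r
    simp only [smul_eq_mul] at h
    rw [h, cauchy (x i) (hxball i)]
  have hint : (∮ t in C(c, r), (l X / l t) * (f t / (t - X)))
      = (2 * (Real.pi : ℂ) * Complex.I) * f X -
        ∑ i, (∏ j ∈ univ.erase i, (X - x j) / (x i - x j)) *
          ((2 * (Real.pi : ℂ) * Complex.I) * f (x i)) := by
    rw [circleIntegral.integral_congr hr.le hcongr,
      circleIntegral.integral_sub (hci X hX) hsumci, cauchy X hX, hswap]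
    rw [Finset.sum_congr rfl fun i _ => hterm2 i]
  rw [hint, hP]
  have h2 : (f X - ∑ i, f (x i) * ∏ j ∈ univ.erase i, (X - x j) / (x i - x j)) *
      (2 * (Real.pi : ℂ) * Complex.I)
      = 2 * (Real.pi : ℂ) * Complex.I * f X -
        ∑ i, (∏ j ∈ univ.erase i, (X - x j) / (x i - x j)) *
          ((2 * (Real.pi : ℂ) * Complex.I) * f (x i)) := by
    rw [sub_mul, Finset.sum_mul]
    congr 1
    · ring
    · exact Finset.sum_congr rfl fun i _ => by ring
  rw [← h2, mul_comm, mul_one_div, mul_div_cancel_right₀ _ hπ]
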